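/- arXiv:1511.03927 — 2 statements merged into one kernel-verified Lean document; each statement's English description precedes it below -/
import Mathlib

section
/- Let n be a positive integer, d > 0, b ≥ 0 with a := d − 2b, and 0 ≤ γ ≤ 1. Let A be a real symmetric 2n×2n matrix, let D be a diagonal matrix with positive diagonal entries d_1,…,d_{2n} satisfying |d_i − d| ≤ γ·d for every i, let N = D^{−1/2} A D^{−1/2}, and assume ‖N‖ ≤ 1. Let B = (d/(2n))·𝟙𝟙ᵀ + ((a−b)/(2n))·χχᵀ. If ‖A − B‖ ≤ γ·d, then ‖N − (1/d)·B‖ ≤ 4γ. -/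
/-- The spectral norm (ℓ²-operator norm) of a square real matrix. -/
noncomputable def specNorm {m : ℕ} (M : Matrix (Fin m) (Fin m) ℝ) : ℝ :=
  ‖Matrix.toEuclideanCLM (𝕜 := ℝ) M‖

/-- The partition indicator vector `χ`: `+1` on the first community, `-1` on the second. -/
noncomputable def chi (n : ℕ) (i : Fin (2*n)) : ℝ := if i.val < n then 1 else -1


lemma specNorm_nonneg {m : ℕ} (M : Matrix (Fin m) (Fin m) ℝ) : 0 ≤ specNorm M :=
  norm_nonneg _

lemma specNorm_mul_le {m : ℕ} (M P : Matrix (Fin m) (Fin m) ℝ) :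
    specNorm (M * P) ≤ specNorm M * specNorm P := by
  unfold specNorm; rw [map_mul]; exact norm_mul_le _ _

lemma specNorm_sub_le {m : ℕ} (M P : Matrix (Fin m) (Fin m) ℝ) :
    specNorm (M - P) ≤ specNorm M + specNorm P := by
  unfold specNorm; rw [map_sub]; exact norm_sub_le _ _

set_option synthInstance.maxHeartbeats 1000000 in
lemma specNorm_smul_le {m : ℕ} (c : ℝ) (M : Matrix (Fin m) (Fin m) ℝ) :
    specNorm (c • M) ≤ |c| * specNorm M := by
  unfold specNorm; rw [map_smul, ← Real.norm_eq_abs]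
  exact norm_smul_le c (Matrix.toEuclideanCLM (𝕜 := ℝ) M)

lemma specNorm_diagonal_le {m : ℕ} (g : Fin m → ℝ) (C : ℝ) (hC : 0 ≤ C)
    (h : ∀ i, |g i| ≤ C) : specNorm (Matrix.diagonal g) ≤ C := by
  unfold specNorm
  apply ContinuousLinearMap.opNorm_le_bound _ hC
  intro x
  have hx : x = (WithLp.equiv 2 (Fin m → ℝ)).symm (WithLp.equiv 2 _ x) := rfl
  rw [hx, (show ∀ (M : Matrix (Fin m) (Fin m) ℝ) (v : Fin m → ℝ), Matrix.toEuclideanCLM (𝕜 := ℝ) M ((WithLp.equiv 2 (Fin m → ℝ)).symm v) = (WithLp.equiv 2 (Fin m → ℝ)).symm (Matrix.toLin' M v) from fun _ _ => rfl)]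
  rw [EuclideanSpace.norm_eq, EuclideanSpace.norm_eq]
  rw [← Real.sqrt_sq hC, ← Real.sqrt_mul (sq_nonneg C)]
  apply Real.sqrt_le_sqrt
  rw [Finset.mul_sum]
  apply Finset.sum_le_sum
  intro i _
  simp only [WithLp.equiv_symm_apply, WithLp.ofLp_toLp, Matrix.toLin'_apply, Matrix.mulVec_diagonal,
    Real.norm_eq_abs, sq_abs]
  have h2 : (g i)^2 ≤ C^2 := by
    have := abs_le.mp (h i); nlinarith
  nlinarith [sq_nonneg ((WithLp.equiv 2 (Fin m → ℝ)) x i)]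


set_option maxHeartbeats 1000000 in
/-- Let `A` be real symmetric `2n×2n`, `D` diagonal with positive entries
`dᵢ` satisfying `|dᵢ - d| ≤ γ·d`, `N = D^{-1/2} A D^{-1/2}` with `‖N‖ ≤ 1`, and, with
`a := d - 2b`, let `B = (d/(2n))·𝟙𝟙ᵀ + ((a-b)/(2n))·χχᵀ`.  If `‖A - B‖ ≤ γ·d`, then
`‖N - (1/d)·B‖ ≤ 4γ`. -/
theorem stmt4 (n : ℕ) (hn : 0 < n) (d b γ : ℝ) (hd : 0 < d) (hb : 0 ≤ b)
    (hγ0 : 0 ≤ γ) (hγ1 : γ ≤ 1)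
    (a : ℝ) (ha : a = d - 2 * b)
    (A : Matrix (Fin (2*n)) (Fin (2*n)) ℝ) (hA : A.IsSymm)
    (dv : Fin (2*n) → ℝ) (hdv : ∀ i, 0 < dv i) (hclose : ∀ i, |dv i - d| ≤ γ * d)
    (N : Matrix (Fin (2*n)) (Fin (2*n)) ℝ)
    (hN : N = Matrix.diagonal (fun i => (Real.sqrt (dv i))⁻¹) * A *
              Matrix.diagonal (fun i => (Real.sqrt (dv i))⁻¹))
    (hNnorm : specNorm N ≤ 1)
    (B : Matrix (Fin (2*n)) (Fin (2*n)) ℝ)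
    (hB : B = (d / (2*n)) • Matrix.vecMulVec (fun _ => (1:ℝ)) (fun _ => (1:ℝ))
        + ((a - b) / (2*n)) • Matrix.vecMulVec (chi n) (chi n))
    (hAB : specNorm (A - B) ≤ γ * d) :
    specNorm (N - (1 / d) • B) ≤ 4 * γ := by
  set c : ℝ := Real.sqrt d with hc
  have hc0 : 0 < c := Real.sqrt_pos.mpr hd
  have hc2 : c * c = d := Real.mul_self_sqrt hd.le
  set g : Fin (2*n) → ℝ := fun i => Real.sqrt (dv i) - c with hg
  set G : Matrix (Fin (2*n)) (Fin (2*n)) ℝ := Matrix.diagonal g with hGdef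
  -- bound on G
  have hGnorm : specNorm G ≤ γ * c := by
    apply specNorm_diagonal_le _ _ (by positivity)
    intro i
    have hs0 : (0:ℝ) ≤ Real.sqrt (dv i) := Real.sqrt_nonneg _
    have habs := abs_le.mp (hclose i)
    have upper : Real.sqrt (dv i) ≤ (1 + γ) * c := by
      have h1 : dv i ≤ (1 + γ) * d := by linarith [habs.2]
      calc Real.sqrt (dv i) ≤ Real.sqrt ((1 + γ) * d) := Real.sqrt_le_sqrt h1
        _ = Real.sqrt (1 + γ) * c := Real.sqrt_mul (by linarith) d
        _ ≤ (1 + γ) * c := by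
            have ht : Real.sqrt (1 + γ) ≤ 1 + γ := by
              nlinarith [Real.sq_sqrt (show (0:ℝ) ≤ 1 + γ by linarith),
                Real.sqrt_nonneg (1 + γ)]
            nlinarith
    have lower : (1 - γ) * c ≤ Real.sqrt (dv i) := by
      have h1 : (1 - γ) * d ≤ dv i := by linarith [habs.1]
      calc (1 - γ) * c = Real.sqrt (((1 - γ) * c)^2) :=
            (Real.sqrt_sq (mul_nonneg (by linarith) hc0.le)).symm
        _ ≤ Real.sqrt (dv i) := by
            apply Real.sqrt_le_sqrt
            have hγγ : 0 ≤ γ * (1 - γ) * d :=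
              mul_nonneg (mul_nonneg hγ0 (by linarith)) hd.le
            nlinarith
    rw [abs_le]
    constructor
    · simp only [hg]; nlinarith
    · simp only [hg]; nlinarith
  -- A = Dh N Dh
  set Dinv : Matrix (Fin (2*n)) (Fin (2*n)) ℝ :=
    Matrix.diagonal (fun i => (Real.sqrt (dv i))⁻¹) with hDinvdef
  set Dh : Matrix (Fin (2*n)) (Fin (2*n)) ℝ :=
    Matrix.diagonal (fun i => Real.sqrt (dv i)) with hDhdef
  have hsne : ∀ i : Fin (2*n), Real.sqrt (dv i) ≠ 0 :=
    fun i => ne_of_gt (Real.sqrt_pos.mpr (hdv i))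
  have hDhDinv : Dh * Dinv = 1 := by
    rw [hDhdef, hDinvdef, Matrix.diagonal_mul_diagonal]
    have : (fun i => Real.sqrt (dv i) * (Real.sqrt (dv i))⁻¹) = fun _ : Fin (2*n) => (1:ℝ) :=
      funext fun i => mul_inv_cancel₀ (hsne i)
    rw [this, Matrix.diagonal_one]
  have hDinvDh : Dinv * Dh = 1 := by
    rw [hDhdef, hDinvdef, Matrix.diagonal_mul_diagonal]
    have : (fun i => (Real.sqrt (dv i))⁻¹ * Real.sqrt (dv i)) = fun _ : Fin (2*n) => (1:ℝ) :=
      funext fun i => inv_mul_cancel₀ (hsne i)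
    rw [this, Matrix.diagonal_one]
  have hA2 : A = Dh * N * Dh := by
    have key : Dh * (Dinv * A * Dinv) * Dh = A := by
      simp only [Matrix.mul_assoc]
      rw [hDinvDh, Matrix.mul_one, ← Matrix.mul_assoc, hDhDinv, one_mul]
    rw [hN]; exact key.symm
  have hDh_split : Dh = c • (1 : Matrix (Fin (2*n)) (Fin (2*n)) ℝ) + G := by
    ext i j
    by_cases hij : i = j
    · subst hij
      simp [hDhdef, hGdef, Matrix.diagonal_apply_eq, Matrix.one_apply_eq, hg]
    · simp [hDhdef, hGdef, Matrix.diagonal_apply_ne _ hij, Matrix.one_apply_ne hij]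
  have expand : A = d • N + c • (G * N) + c • (N * G) + G * N * G := by
    rw [hA2, hDh_split]
    simp only [add_mul, mul_add, Matrix.smul_mul, Matrix.mul_smul, Matrix.one_mul,
      Matrix.mul_one, smul_smul, hc2, one_mul, mul_one]
    abel
  have hid : d • (N - (1/d) • B) = (A - B) - c • (G * N) - c • (N * G) - G * N * G := by
    have h1 : d • ((1/d:ℝ) • B) = B := by
      rw [smul_smul, mul_one_div, div_self hd.ne', one_smul]
    rw [smul_sub, h1, expand]; abel
  -- norm bounds
  have hGNle : specNorm (c • (G * N)) ≤ γ * d := by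
    calc specNorm (c • (G * N)) ≤ |c| * specNorm (G * N) := specNorm_smul_le _ _
      _ ≤ c * (specNorm G * specNorm N) := by
          rw [abs_of_pos hc0]
          exact mul_le_mul_of_nonneg_left (specNorm_mul_le _ _) hc0.le
      _ ≤ c * ((γ * c) * 1) := by
          apply mul_le_mul_of_nonneg_left _ hc0.le
          exact mul_le_mul hGnorm hNnorm (specNorm_nonneg _) (by positivity)
      _ = γ * d := by rw [mul_one]; nlinarith
  have hNGle : specNorm (c • (N * G)) ≤ γ * d := by
    calc specNorm (c • (N * G)) ≤ |c| * specNorm (N * G) := specNorm_smul_le _ _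
      _ ≤ c * (specNorm N * specNorm G) := by
          rw [abs_of_pos hc0]
          exact mul_le_mul_of_nonneg_left (specNorm_mul_le _ _) hc0.le
      _ ≤ c * (1 * (γ * c)) := by
          apply mul_le_mul_of_nonneg_left _ hc0.le
          exact mul_le_mul hNnorm hGnorm (specNorm_nonneg _) (by norm_num)
      _ = γ * d := by nlinarith
  have hGNGle : specNorm (G * N * G) ≤ γ * d := by
    calc specNorm (G * N * G) ≤ specNorm (G * N) * specNorm G := specNorm_mul_le _ _
      _ ≤ (specNorm G * specNorm N) * specNorm G := by
          exact mul_le_mul_of_nonneg_right (specNorm_mul_le _ _) (specNorm_nonneg _)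
      _ ≤ ((γ * c) * 1) * (γ * c) := by
          apply mul_le_mul _ hGnorm (specNorm_nonneg _) (by positivity)
          exact mul_le_mul hGnorm hNnorm (specNorm_nonneg _) (by positivity)
      _ = γ * γ * d := by rw [mul_one]; nlinarith
      _ ≤ γ * d := by nlinarith [mul_nonneg (mul_nonneg hγ0 hd.le) (sub_nonneg.mpr hγ1)]
  have hRHS : specNorm (d • (N - (1/d) • B)) ≤ 4 * (γ * d) := by
    rw [hid]
    calc specNorm ((A - B) - c • (G * N) - c • (N * G) - G * N * G)
        ≤ specNorm ((A - B) - c • (G * N) - c • (N * G)) + specNorm (G * N * G) :=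
          specNorm_sub_le _ _
      _ ≤ (specNorm ((A - B) - c • (G * N)) + specNorm (c • (N * G))) + specNorm (G * N * G) := by
          gcongr; exact specNorm_sub_le _ _
      _ ≤ ((specNorm (A - B) + specNorm (c • (G * N))) + specNorm (c • (N * G)))
            + specNorm (G * N * G) := by
          gcongr; exact specNorm_sub_le _ _
      _ ≤ ((γ * d + γ * d) + γ * d) + γ * d := by gcongr
      _ = 4 * (γ * d) := by ring
  have hX : specNorm (N - (1/d) • B) ≤ (1/d) * specNorm (d • (N - (1/d) • B)) := by
    have : (1/d : ℝ) • (d • (N - (1/d) • B)) = N - (1/d) • B := by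
      rw [smul_smul, one_div, inv_mul_cancel₀ hd.ne', one_smul]
    calc specNorm (N - (1/d) • B) = specNorm ((1/d : ℝ) • (d • (N - (1/d) • B))) := by rw [this]
      _ ≤ |1/d| * specNorm (d • (N - (1/d) • B)) := specNorm_smul_le _ _
      _ = (1/d) * specNorm (d • (N - (1/d) • B)) := by rw [abs_of_pos (by positivity)]
  calc specNorm (N - (1/d) • B) ≤ (1/d) * specNorm (d • (N - (1/d) • B)) := hX
    _ ≤ (1/d) * (4 * (γ * d)) := by
        apply mul_le_mul_of_nonneg_left hRHS (by positivity)
    _ = 4 * γ := by field_simp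
end

section
/- Let n be a positive integer, d > 0, and c a real number with |c| ≤ d. Let B = (d/(2n))·𝟙𝟙ᵀ + (c/(2n))·χχᵀ, and let D be a 2n×2n diagonal matrix with nonnegative diagonal entries d_1,…,d_{2n} satisfying ∑_{j=1}^{2n} (sqrt(d) − sqrt(d_j))² ≤ 2n. Then ‖B − (1/sqrt(d))·B·D^{1/2}‖ ≤ 2·sqrt(d). -/
set_option synthInstance.maxHeartbeats 1000000
set_option maxHeartbeats 1000000

lemma rank1_bound {m : ℕ} (u v : Fin m → ℝ) :
    specNorm (Matrix.vecMulVec u v)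
      ≤ Real.sqrt (∑ i, u i ^ 2) * Real.sqrt (∑ j, v j ^ 2) := by
  unfold specNorm
  apply ContinuousLinearMap.opNorm_le_bound _ (by positivity)
  intro x
  set eu : EuclideanSpace ℝ (Fin m) := (WithLp.equiv 2 _).symm u with heu
  set ev : EuclideanSpace ℝ (Fin m) := (WithLp.equiv 2 _).symm v with hev
  have hx : Matrix.toEuclideanCLM (𝕜 := ℝ) (Matrix.vecMulVec u v) x
      = (inner ℝ ev x : ℝ) • eu := by
    apply (WithLp.equiv 2 _).injective
    rw [WithLp.equiv_apply, Matrix.ofLp_toEuclideanCLM]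
    ext i
    simp [Matrix.mulVec, Matrix.vecMulVec, dotProduct, PiLp.inner_apply,
      heu, hev, Finset.mul_sum]
    rw [Finset.sum_mul]
    exact Finset.sum_congr rfl (fun j _ => by ring)
  rw [hx, norm_smul]
  have hnu : ‖eu‖ = Real.sqrt (∑ i, u i ^ 2) := by
    rw [EuclideanSpace.norm_eq]
    congr 1
    exact Finset.sum_congr rfl fun i _ => by
      simp [heu, Real.norm_eq_abs, sq_abs]
  have hnv : ‖ev‖ = Real.sqrt (∑ j, v j ^ 2) := by
    rw [EuclideanSpace.norm_eq]
    congr 1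
    exact Finset.sum_congr rfl fun i _ => by
      simp [hev, Real.norm_eq_abs, sq_abs]
  calc ‖(inner ℝ ev x : ℝ)‖ * ‖eu‖ ≤ (‖ev‖ * ‖x‖) * ‖eu‖ := by
        apply mul_le_mul_of_nonneg_right _ (norm_nonneg _)
        exact norm_inner_le_norm ev x
    _ = Real.sqrt (∑ i, u i ^ 2) * Real.sqrt (∑ j, v j ^ 2) * ‖x‖ := by
        rw [hnu, hnv]; ring

lemma specNorm_add_le {m : ℕ} (A C : Matrix (Fin m) (Fin m) ℝ) :
    specNorm (A + C) ≤ specNorm A + specNorm C := by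
  unfold specNorm; rw [map_add]; exact norm_add_le _ _

lemma specNorm_smul {m : ℕ} (a : ℝ) (A : Matrix (Fin m) (Fin m) ℝ) :
    specNorm (a • A) ≤ |a| * specNorm A := by
  unfold specNorm
  rw [map_smul, ← Real.norm_eq_abs]
  exact ContinuousLinearMap.opNorm_smul_le a _


/-- Let `B = (d/(2n))·𝟙𝟙ᵀ + (c/(2n))·χχᵀ` with `|c| ≤ d`, and let `D`
be diagonal with nonnegative entries `d_j` satisfying `∑_j (√d - √(d_j))² ≤ 2n`.
Then `‖B - (1/√d)·B·D^{1/2}‖ ≤ 2·√d`. -/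
theorem stmt13 (n : ℕ) (hn : 0 < n) (d c : ℝ) (hd : 0 < d) (hc : |c| ≤ d)
    (B : Matrix (Fin (2*n)) (Fin (2*n)) ℝ)
    (hB : B = (d / (2*n)) • Matrix.vecMulVec (fun _ => (1:ℝ)) (fun _ => (1:ℝ))
        + (c / (2*n)) • Matrix.vecMulVec (chi n) (chi n))
    (dv : Fin (2*n) → ℝ) (hdv : ∀ j, 0 ≤ dv j)
    (hsum : ∑ j, (Real.sqrt d - Real.sqrt (dv j)) ^ 2 ≤ 2 * n) :
    specNorm (B - (1 / Real.sqrt d) • (B * Matrix.diagonal fun j => Real.sqrt (dv j)))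
      ≤ 2 * Real.sqrt d := by
  have hsd : 0 < Real.sqrt d := Real.sqrt_pos.mpr hd
  have hN : (0:ℝ) < 2 * n := by positivity
  set v1 : Fin (2*n) → ℝ := fun j => 1 - Real.sqrt (dv j) / Real.sqrt d with hv1
  set v2 : Fin (2*n) → ℝ := fun j => chi n j * v1 j with hv2
  have hM : B - (1 / Real.sqrt d) • (B * Matrix.diagonal fun j => Real.sqrt (dv j))
      = (d / (2*n)) • Matrix.vecMulVec (fun _ => (1:ℝ)) v1
        + (c / (2*n)) • Matrix.vecMulVec (chi n) v2 := by
    ext i j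
    simp only [hB, Matrix.sub_apply, Matrix.smul_apply, Matrix.add_apply,
      Matrix.vecMulVec_apply, Matrix.add_mul, Matrix.smul_mul,
      Matrix.mul_diagonal, smul_eq_mul, hv2, hv1]
    field_simp
  rw [hM]
  -- bounds on the squared norms
  have hchi2 : ∀ j : Fin (2*n), chi n j ^ 2 = 1 := by
    intro j; unfold chi; split <;> norm_num
  have h1 : ∑ i : Fin (2*n), (1:ℝ) ^ 2 = 2 * n := by simp
  have hchisum : ∑ i : Fin (2*n), chi n i ^ 2 = 2 * n := by
    simp [hchi2]
  have hv1sq : ∀ j, v1 j ^ 2 = (Real.sqrt d - Real.sqrt (dv j)) ^ 2 / d := by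
    intro j
    have : v1 j = (Real.sqrt d - Real.sqrt (dv j)) / Real.sqrt d := by
      simp only [hv1]; field_simp
    rw [this, div_pow, Real.sq_sqrt hd.le]
  have hv1sum : ∑ j, v1 j ^ 2 ≤ 2 * n / d := by
    calc ∑ j, v1 j ^ 2 = (∑ j, (Real.sqrt d - Real.sqrt (dv j)) ^ 2) / d := by
          rw [Finset.sum_div]; exact Finset.sum_congr rfl fun j _ => hv1sq j
      _ ≤ 2 * n / d := by gcongr
  have hv2sum : ∑ j, v2 j ^ 2 ≤ 2 * n / d := by
    calc ∑ j, v2 j ^ 2 = ∑ j, v1 j ^ 2 := by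
          apply Finset.sum_congr rfl; intro j _
          rw [hv2, mul_pow, hchi2, one_mul]
      _ ≤ 2 * n / d := hv1sum
  have hkey : ∀ u v : Fin (2*n) → ℝ, (∑ i, u i ^ 2) = 2*n → (∑ j, v j ^ 2) ≤ 2*n/d →
      specNorm (Matrix.vecMulVec u v) ≤ 2*n / Real.sqrt d := by
    intro u v hu hv
    refine (rank1_bound u v).trans ?_
    rw [hu]
    calc Real.sqrt (2*n) * Real.sqrt (∑ j, v j ^ 2)
        ≤ Real.sqrt (2*n) * Real.sqrt (2*n/d) := by
          gcongr
      _ = 2*n / Real.sqrt d := by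
          rw [← Real.sqrt_mul hN.le]
          rw [show (2*(n:ℝ)) * (2*n/d) = (2*n/Real.sqrt d)^2 by
            rw [div_pow, Real.sq_sqrt hd.le]; ring]
          exact Real.sqrt_sq (by positivity)
  calc specNorm ((d / (2*n)) • Matrix.vecMulVec (fun _ => (1:ℝ)) v1
        + (c / (2*n)) • Matrix.vecMulVec (chi n) v2)
      ≤ specNorm ((d / (2*n)) • Matrix.vecMulVec (fun _ => (1:ℝ)) v1)
        + specNorm ((c / (2*n)) • Matrix.vecMulVec (chi n) v2) := specNorm_add_le _ _
    _ ≤ |d / (2*n)| * specNorm (Matrix.vecMulVec (fun _ => (1:ℝ)) v1)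
        + |c / (2*n)| * specNorm (Matrix.vecMulVec (chi n) v2) :=
        add_le_add (specNorm_smul _ _) (specNorm_smul _ _)
    _ ≤ |d / (2*n)| * (2*n / Real.sqrt d) + |c / (2*n)| * (2*n / Real.sqrt d) :=
        add_le_add
          (mul_le_mul_of_nonneg_left (hkey _ _ h1 hv1sum) (abs_nonneg _))
          (mul_le_mul_of_nonneg_left (hkey _ _ hchisum hv2sum) (abs_nonneg _))
    _ = (d + |c|) / Real.sqrt d := by
        rw [abs_of_pos (by positivity : (0:ℝ) < d / (2*n)), abs_div,
          abs_of_pos hN]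
        field_simp
    _ ≤ (d + d) / Real.sqrt d := by gcongr
    _ = 2 * Real.sqrt d := by
        rw [show d + d = 2*d from by ring, mul_div_assoc, Real.div_sqrt]
end
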